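/- Let $S\leq T$ be $\mathbb{G}$-stopping times. For any $\mathbb{G}$-predictable process $K$, both $K^{(S,T]}$ and $\mathbf{1}_{(S,T]}K$ are $\mathbb{G}^{(S,T]}$-predictable processes. Conversely, for any $\mathbb{G}^{(S,T]}$-predictable process $K'$, both $K'^{(S,T]}$ and $\mathbf{1}_{(S,T]}K'$ are $\mathbb{G}$-predictable processes. -/

import Mathlib

open MeasureTheory Set Filter
open scoped ENNReal

noncomputable section

variable {Ω : Type*} {m : MeasurableSpace Ω}

/-- The σ-algebra `F_T` associated with a random time `T`. -/
def sigmaAt (F : MeasureTheory.Filtration ℝ≥0∞ m) (T : Ω → ℝ≥0∞) : MeasurableSpace Ω :=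
  MeasurableSpace.generateFrom {A | ∀ t, MeasurableSet[F t] (A ∩ {ω | T ω ≤ t})}

/-- The σ-algebra `F_{T-}` associated with a random time `T`. -/
def sigmaAtPred (F : MeasureTheory.Filtration ℝ≥0∞ m) (T : Ω → ℝ≥0∞) : MeasurableSpace Ω :=
  MeasurableSpace.generateFrom
    ({A | MeasurableSet[F 0] A}
      ∪ (⋃ t : ℝ≥0∞, {s | ∃ A, MeasurableSet[F t] A ∧ s = A ∩ {ω | t < T ω}})
      ∪ {s | ∃ A, MeasurableSet[F ⊤] A ∧ s = A ∩ {ω | T ω = ⊤}})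

/-- Progressive enlargement of the filtration `F` by the random time `τ`. -/
def progEnl (F : MeasureTheory.Filtration ℝ≥0∞ m) (τ : Ω → ℝ≥0∞) (t : ℝ≥0∞) :
    MeasurableSpace Ω :=
  if t = ⊤ then F ⊤ ⊔ MeasurableSpace.comap τ inferInstance
  else ⨅ s ∈ Ioi t, (F s ⊔ MeasurableSpace.comap (fun ω => min (τ ω) s) inferInstance)

/-- The family of sets defining `𝒢*_T`. -/
def gStarSets (F : MeasureTheory.Filtration ℝ≥0∞ m) (τ T : Ω → ℝ≥0∞) : Set (Set Ω) :=
  {C | ∃ A₁, MeasurableSet[sigmaAt F T] A₁ ∧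
      ∃ A₂, MeasurableSet[sigmaAt F T ⊔ MeasurableSpace.comap τ inferInstance] A₂ ∧
      ∃ A₃, MeasurableSet[F ⊤ ⊔ MeasurableSpace.comap τ inferInstance] A₃ ∧
      C = ({ω | T ω < τ ω} ∩ A₁) ∪ ({ω | τ ω ≤ T ω ∧ T ω ≠ ⊤} ∩ A₂) ∪
          ({ω | T ω = ⊤} ∩ A₃)}

/-- The σ-algebra `𝒢*_T`. -/
def gStar (F : MeasureTheory.Filtration ℝ≥0∞ m) (τ T : Ω → ℝ≥0∞) : MeasurableSpace Ω :=
  MeasurableSpace.generateFrom (gStarSets F τ T)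

/-- The family of sets defining `𝒢^{(S,T]}_t`. -/
def gFragSets (F G : MeasureTheory.Filtration ℝ≥0∞ m) (τ S T : Ω → ℝ≥0∞) (t : ℝ≥0∞) :
    Set (Set Ω) :=
  {C | ∃ A, MeasurableSet[gStar F τ T] A ∧
      ∃ B, MeasurableSet[sigmaAt G (fun ω => max (S ω) t)] B ∧
      C = ({ω | T ω ≤ max (S ω) t} ∩ A) ∪ ({ω | max (S ω) t < T ω} ∩ B)}

/-- The σ-algebra `𝒢^{(S,T]}_t`. -/
def gFrag (F G : MeasureTheory.Filtration ℝ≥0∞ m) (τ S T : Ω → ℝ≥0∞) (t : ℝ≥0∞) :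
    MeasurableSpace Ω :=
  MeasurableSpace.generateFrom (gFragSets F G τ S T t)

/-- Stopping time with respect to a family of σ-algebras. -/
def IsStoppingFam (𝒢 : ℝ≥0∞ → MeasurableSpace Ω) (R : Ω → ℝ≥0∞) : Prop :=
  ∀ t, MeasurableSet[𝒢 t] {ω | R ω ≤ t}

/-- σ-algebra at a random time `R` for a family of σ-algebras. -/
def sigmaAtFam (𝒢 : ℝ≥0∞ → MeasurableSpace Ω) (R : Ω → ℝ≥0∞) : MeasurableSpace Ω :=
  MeasurableSpace.generateFrom {A | ∀ t, MeasurableSet[𝒢 t] (A ∩ {ω | R ω ≤ t})}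

/-- Martingale with respect to a family of σ-algebras. -/
def MartOn (μ : Measure Ω) (𝒢 : ℝ≥0∞ → MeasurableSpace Ω) (X : ℝ≥0∞ → Ω → ℝ) : Prop :=
  (∀ t, Measurable[𝒢 t] (X t)) ∧ (∀ t, Integrable (X t) μ) ∧
    ∀ s t, s ≤ t → ∀ A, MeasurableSet[𝒢 s] A →
      ∫ ω in A, X t ω ∂μ = ∫ ω in A, X s ω ∂μ

/-- The process `X` stopped at the random time `R`. -/
def stoppedAt (X : ℝ≥0∞ → Ω → ℝ) (R : Ω → ℝ≥0∞) : ℝ≥0∞ → Ω → ℝ :=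
  fun t ω => X (min t (R ω)) ω

/-- Local martingale with respect to a family of σ-algebras. -/
def LocMartOn (μ : Measure Ω) (𝒢 : ℝ≥0∞ → MeasurableSpace Ω) (X : ℝ≥0∞ → Ω → ℝ) : Prop :=
  ∃ R : ℕ → Ω → ℝ≥0∞, (∀ n, IsStoppingFam 𝒢 (R n)) ∧ (∀ ω, Monotone fun n => R n ω) ∧
    (∀ ω, ⨆ n, R n ω = ⊤) ∧ ∀ n, MartOn μ 𝒢 (stoppedAt X (R n))

/-- The process `X^{(S,T]}` (with the convention `X^{(S,T]} = X^{(S, S ∨ T]}`). -/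
def frag (S T : Ω → ℝ≥0∞) (X : ℝ≥0∞ → Ω → ℝ) : ℝ≥0∞ → Ω → ℝ :=
  fun t ω => X (min (max (S ω) t) (max (S ω) (T ω))) ω - X (S ω) ω

/-- The predictable σ-algebra associated with a family of σ-algebras. -/
def predSigma (𝒢 : ℝ≥0∞ → MeasurableSpace Ω) : MeasurableSpace (ℝ≥0∞ × Ω) :=
  MeasurableSpace.generateFrom
    ({C | ∃ s t : ℝ≥0∞, ∃ A, MeasurableSet[𝒢 s] A ∧ C = (Ioc s t) ×ˢ A} ∪
      {C | ∃ A, MeasurableSet[𝒢 0] A ∧ C = ({0} : Set ℝ≥0∞) ×ˢ A})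

variable (μ : Measure Ω) [IsProbabilityMeasure μ] (F G : MeasureTheory.Filtration ℝ≥0∞ m)
  (τ : Ω → ℝ≥0∞) (hτ : Measurable τ)
  (hFrc : ∀ t, t ≠ ⊤ → (F t : MeasurableSpace Ω) = ⨅ s ∈ Ioi t, (F s : MeasurableSpace Ω))
  (hG : ∀ t, (G t : MeasurableSpace Ω) = progEnl F τ t)


/-! ### Auxiliary lemmas for `gFrag_predictable` -/

lemma GFP_exists_btwn :
    ∃ Q : Set ℝ≥0∞, Q.Countable ∧ ∀ a b : ℝ≥0∞, a < b → ∃ q ∈ Q, a < q ∧ q < b := by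
  obtain ⟨Q, hQc, hQd⟩ := TopologicalSpace.exists_countable_dense ℝ≥0∞
  refine ⟨Q, hQc, fun a b hab => ?_⟩
  obtain ⟨q, hqQ, hq⟩ := hQd.exists_mem_open isOpen_Ioo (nonempty_Ioo.mpr hab)
  exact ⟨q, hqQ, hq.1, hq.2⟩

lemma GFP_max_stop {S : Ω → ℝ≥0∞} (hS : ∀ x, MeasurableSet[G x] {ω | S ω ≤ x}) (a x : ℝ≥0∞) :
    MeasurableSet[G x] {ω | max (S ω) a ≤ x} := by
  by_cases hax : a ≤ x
  · have h : {ω | max (S ω) a ≤ x} = {ω | S ω ≤ x} := by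
      ext ω; simp [max_le_iff, hax]
    rw [h]; exact hS x
  · have h : {ω | max (S ω) a ≤ x} = ∅ := by
      ext ω
      simp only [mem_setOf_eq, mem_empty_iff_false, iff_false]
      exact fun hc => hax (le_trans (le_max_right _ _) hc)
    rw [h]; exact @MeasurableSet.empty _ (G x)

lemma GFP_lt_stop_inter {T : Ω → ℝ≥0∞} (hT : ∀ x, MeasurableSet[G x] {ω | T ω ≤ x})
    {R : Ω → ℝ≥0∞} (hR : ∀ x, MeasurableSet[G x] {ω | R ω ≤ x}) (q : ℝ≥0∞) :
    MeasurableSet[G q] {ω | R ω < T ω ∧ R ω ≤ q} := by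
  obtain ⟨Q, hQc, hQb⟩ := GFP_exists_btwn
  have heq : {ω | R ω < T ω ∧ R ω ≤ q}
      = ⋃ r ∈ insert q Q, ({ω | R ω ≤ min r q} ∩ {ω | T ω ≤ min r q}ᶜ) := by
    ext ω
    simp only [mem_iUnion, mem_inter_iff, mem_compl_iff, mem_setOf_eq, exists_prop, not_le]
    constructor
    · rintro ⟨h1, h2⟩
      by_cases hq : q < T ω
      · exact ⟨q, mem_insert _ _, by simpa [min_self] using h2, by simpa [min_self] using hq⟩
      · obtain ⟨r, hrQ, hr1, hr2⟩ := hQb _ _ h1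
        have hrq : r ≤ q := le_trans hr2.le (not_lt.mp hq)
        exact ⟨r, mem_insert_of_mem _ hrQ, le_min hr1.le h2, by rwa [min_eq_left hrq]⟩
    · rintro ⟨r, _, h1, h2⟩
      exact ⟨lt_of_le_of_lt h1 h2, le_trans h1 (min_le_right _ _)⟩
  rw [heq]
  refine MeasurableSet.biUnion (hQc.insert q) fun r _ => ?_
  exact (G.mono (min_le_right r q) _ (hR _)).inter (G.mono (min_le_right r q) _ (hT _)).compl

lemma GFP_sigmaAt_inter {R : Ω → ℝ≥0∞} (hR : ∀ x, MeasurableSet[G x] {ω | R ω ≤ x})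
    {B : Set Ω} (hB : MeasurableSet[sigmaAt G R] B) (u : ℝ≥0∞) :
    MeasurableSet[G u] (B ∩ {ω | R ω ≤ u}) := by
  let mF : MeasurableSpace Ω :=
    { MeasurableSet' := fun A => ∀ x, MeasurableSet[G x] (A ∩ {ω | R ω ≤ x})
      measurableSet_empty := fun x => by
        rw [Set.empty_inter]; exact @MeasurableSet.empty _ (G x)
      measurableSet_compl := fun A hA x => by
        have h : Aᶜ ∩ {ω | R ω ≤ x} = {ω | R ω ≤ x} \ (A ∩ {ω | R ω ≤ x}) := by
          ext ω
          simp only [mem_inter_iff, mem_compl_iff, mem_diff, mem_setOf_eq]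
          tauto
        rw [h]; exact (hR x).diff (hA x)
      measurableSet_iUnion := fun f hf x => by
        rw [Set.iUnion_inter]; exact MeasurableSet.iUnion fun n => hf n x }
  have hle : sigmaAt G R ≤ mF := MeasurableSpace.generateFrom_le fun A hA => hA
  exact hle B hB u

lemma GFP_Emeas {S T : Ω → ℝ≥0∞} (hS : ∀ x, MeasurableSet[G x] {ω | S ω ≤ x}) (hT : ∀ x, MeasurableSet[G x] {ω | T ω ≤ x})
    (a q : ℝ≥0∞) :
    MeasurableSet[G (max a q)] ({ω | max (S ω) a < T ω} ∩ {ω | S ω ≤ q}) := by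
  have h1 := GFP_lt_stop_inter G hT (fun x => GFP_max_stop G hS a x) (max a q)
  have heq : {ω | max (S ω) a < T ω} ∩ {ω | S ω ≤ q}
      = {ω | max (S ω) a < T ω ∧ max (S ω) a ≤ max a q} ∩ {ω | S ω ≤ q} := by
    ext ω
    simp only [mem_inter_iff, mem_setOf_eq]
    constructor
    · rintro ⟨h, hq⟩
      exact ⟨⟨h, max_le (hq.trans (le_max_right a q)) (le_max_left a q)⟩, hq⟩
    · rintro ⟨⟨h, _⟩, hq⟩
      exact ⟨h, hq⟩
  rw [heq]
  exact h1.inter (G.mono (le_max_right a q) _ (hS q))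

lemma GFP_hRed_G {S T : Ω → ℝ≥0∞} (hS : ∀ x, MeasurableSet[G x] {ω | S ω ≤ x}) (hT : ∀ x, MeasurableSet[G x] {ω | T ω ≤ x}) :
    ∀ (a : ℝ≥0∞) (A : Set Ω), MeasurableSet[G a] A → ∀ q : ℝ≥0∞,
      MeasurableSet[G (max a q)] (A ∩ {ω | max (S ω) a < T ω} ∩ {ω | S ω ≤ q}) := by
  intro a A hA q
  rw [inter_assoc]
  exact (G.mono (le_max_left a q) _ hA).inter (GFP_Emeas G hS hT a q)

lemma GFP_hRed_H {S T : Ω → ℝ≥0∞} (hS : ∀ x, MeasurableSet[G x] {ω | S ω ≤ x}) (hT : ∀ x, MeasurableSet[G x] {ω | T ω ≤ x}) :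
    ∀ (a : ℝ≥0∞) (A : Set Ω), MeasurableSet[gFrag F G τ S T a] A → ∀ q : ℝ≥0∞,
      MeasurableSet[G (max a q)] (A ∩ {ω | max (S ω) a < T ω} ∩ {ω | S ω ≤ q}) := by
  intro a A hA
  refine MeasurableSpace.generateFrom_induction
    (C := gFragSets F G τ S T a)
    (p := fun A _ => ∀ q : ℝ≥0∞,
      MeasurableSet[G (max a q)] (A ∩ {ω | max (S ω) a < T ω} ∩ {ω | S ω ≤ q}))
    ?_ ?_ ?_ ?_ A hA
  · rintro A' ⟨A₁, _, B, hB, rfl⟩ _ q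
    have hset : (({ω | T ω ≤ max (S ω) a} ∩ A₁) ∪ ({ω | max (S ω) a < T ω} ∩ B))
          ∩ {ω | max (S ω) a < T ω} ∩ {ω | S ω ≤ q}
        = (B ∩ {ω | max (S ω) a ≤ max a q})
          ∩ ({ω | max (S ω) a < T ω} ∩ {ω | S ω ≤ q}) := by
      ext ω
      simp only [mem_inter_iff, mem_union, mem_setOf_eq]
      constructor
      · rintro ⟨⟨h1, h2⟩, h3⟩
        rcases h1 with ⟨hTle, _⟩ | ⟨_, hB'⟩
        · exact absurd h2 (not_lt.mpr hTle)
        · exact ⟨⟨hB', max_le (h3.trans (le_max_right a q)) (le_max_left a q)⟩, h2, h3⟩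
      · rintro ⟨⟨hB', _⟩, h2, h3⟩
        exact ⟨⟨Or.inr ⟨h2, hB'⟩, h2⟩, h3⟩
    rw [hset]
    exact (GFP_sigmaAt_inter G (fun x => GFP_max_stop G hS a x) hB (max a q)).inter
      (GFP_Emeas G hS hT a q)
  · intro q
    rw [Set.empty_inter, Set.empty_inter]
    exact @MeasurableSet.empty _ (G (max a q))
  · rintro A' _ ih q
    have h : A'ᶜ ∩ {ω | max (S ω) a < T ω} ∩ {ω | S ω ≤ q}
        = ({ω | max (S ω) a < T ω} ∩ {ω | S ω ≤ q})
          \ (A' ∩ {ω | max (S ω) a < T ω} ∩ {ω | S ω ≤ q}) := by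
      ext ω
      simp only [mem_inter_iff, mem_compl_iff, mem_diff, mem_setOf_eq]
      tauto
    rw [h]
    exact (GFP_Emeas G hS hT a q).diff (ih q)
  · intro f _ ih q
    rw [Set.iUnion_inter, Set.iUnion_inter]
    exact MeasurableSet.iUnion fun n => ih n q

lemma GFP_hPiece_G {S T : Ω → ℝ≥0∞} (hT : ∀ x, MeasurableSet[G x] {ω | T ω ≤ x}) :
    ∀ (q : ℝ≥0∞) (M : Set Ω), MeasurableSet[G q] M → M ⊆ {ω | S ω ≤ q} →
      MeasurableSet[G q] (M ∩ {ω | q < T ω}) := by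
  intro q M hM _
  have h : {ω | q < T ω} = {ω | T ω ≤ q}ᶜ := by
    ext ω; simp [not_le]
  rw [h]
  exact hM.inter (hT q).compl

lemma GFP_hPiece_H {S T : Ω → ℝ≥0∞} :
    ∀ (q : ℝ≥0∞) (M : Set Ω), MeasurableSet[G q] M → M ⊆ {ω | S ω ≤ q} →
      MeasurableSet[gFrag F G τ S T q] (M ∩ {ω | q < T ω}) := by
  intro q M hM hsub
  refine MeasurableSpace.measurableSet_generateFrom
    ⟨∅, @MeasurableSet.empty _ (gStar F τ T), M, ?_, ?_⟩
  · refine MeasurableSpace.measurableSet_generateFrom ?_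
    intro u
    by_cases hqu : q ≤ u
    · have h : M ∩ {ω | max (S ω) q ≤ u} = M := by
        ext ω
        simp only [mem_inter_iff, mem_setOf_eq, and_iff_left_iff_imp]
        intro hω
        exact max_le ((hsub hω).trans hqu) hqu
      rw [h]; exact G.mono hqu _ hM
    · have h : M ∩ {ω | max (S ω) q ≤ u} = ∅ := by
        ext ω
        simp only [mem_inter_iff, mem_setOf_eq, mem_empty_iff_false, iff_false, not_and]
        exact fun _ hc => hqu (le_trans (le_max_right _ _) hc)
      rw [h]; exact @MeasurableSet.empty _ ((G u : MeasurableSpace Ω))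
  · ext ω
    simp only [mem_inter_iff, mem_setOf_eq, mem_union, mem_empty_iff_false, and_false,
      inter_empty, false_or]
    constructor
    · rintro ⟨hω, hqT⟩
      exact ⟨max_lt ((hsub hω).trans_lt hqT) hqT, hω⟩
    · rintro ⟨hRT, hω⟩
      exact ⟨hω, lt_of_le_of_lt (le_max_right (S ω) q) hRT⟩

lemma GFP_hD_G {T : Ω → ℝ≥0∞} (hT : ∀ x, MeasurableSet[G x] {ω | T ω ≤ x}) (S : Ω → ℝ≥0∞) :
    ∀ q : ℝ≥0∞, ∃ D : Set Ω, MeasurableSet[G q] D ∧ {ω | T ω ≤ q} ⊆ D ∧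
      ∀ ω ∈ D, S ω < T ω → T ω ≤ max (S ω) q :=
  fun q => ⟨{ω | T ω ≤ q}, hT q, Set.Subset.rfl,
    fun ω h _ => le_trans h (le_max_right (S ω) q)⟩

lemma GFP_hD_H (S T : Ω → ℝ≥0∞) :
    ∀ q : ℝ≥0∞, ∃ D : Set Ω, MeasurableSet[gFrag F G τ S T q] D ∧ {ω | T ω ≤ q} ⊆ D ∧
      ∀ ω ∈ D, S ω < T ω → T ω ≤ max (S ω) q := by
  intro q
  refine ⟨{ω | T ω ≤ max (S ω) q},
    MeasurableSpace.measurableSet_generateFrom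
      ⟨univ, @MeasurableSet.univ _ (gStar F τ T), ∅,
        @MeasurableSet.empty _ (sigmaAt G fun ω => max (S ω) q), by ext ω; simp⟩,
    fun ω h => show T ω ≤ max (S ω) q from le_trans h (le_max_right _ _),
    fun ω h _ => h⟩

lemma GFP_meas_ite {α : Type*} {mα : MeasurableSpace α} {W : α → Prop} [DecidablePred W]
    (hW : MeasurableSet[mα] {x | W x}) {f : α → ℝ}
    (hf : ∀ B : Set ℝ, MeasurableSet B → MeasurableSet[mα] {x | f x ∈ B ∧ W x}) :
    Measurable[mα] fun x => if W x then f x else 0 := by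
  classical
  intro B hB
  have heq : (fun x => if W x then f x else 0) ⁻¹' B
      = {x | f x ∈ B ∧ W x} ∪ (if (0:ℝ) ∈ B then {x | W x}ᶜ else ∅) := by
    ext x
    simp only [mem_preimage, mem_union, mem_setOf_eq, mem_compl_iff]
    by_cases hx : W x <;> by_cases h0 : (0:ℝ) ∈ B <;> simp [hx, h0]
  rw [heq]
  refine (hf B hB).union ?_
  split_ifs
  exacts [hW.compl, MeasurableSet.empty]


lemma GFP_key {S T : Ω → ℝ≥0∞}
    (hS : ∀ x, MeasurableSet[G x] {ω | S ω ≤ x}) (hT : ∀ x, MeasurableSet[G x] {ω | T ω ≤ x}) (hST : ∀ ω, S ω ≤ T ω)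
    (𝒢 : ℝ≥0∞ → MeasurableSpace Ω)
    (hPiece : ∀ (q : ℝ≥0∞) (M : Set Ω), MeasurableSet[G q] M → M ⊆ {ω | S ω ≤ q} →
      MeasurableSet[𝒢 q] (M ∩ {ω | q < T ω}))
    (hD : ∀ q : ℝ≥0∞, ∃ D : Set Ω, MeasurableSet[𝒢 q] D ∧ {ω | T ω ≤ q} ⊆ D ∧
      ∀ ω ∈ D, S ω < T ω → T ω ≤ max (S ω) q)
    (𝒜 : ℝ≥0∞ → MeasurableSpace Ω)
    (hRed : ∀ (a : ℝ≥0∞) (A : Set Ω), MeasurableSet[𝒜 a] A → ∀ q : ℝ≥0∞,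
      MeasurableSet[G (max a q)] (A ∩ {ω | max (S ω) a < T ω} ∩ {ω | S ω ≤ q})) :
    MeasurableSet[predSigma 𝒢] {p : ℝ≥0∞ × Ω | S p.2 < p.1 ∧ S p.2 < T p.2} ∧
    MeasurableSet[predSigma 𝒢] {p : ℝ≥0∞ × Ω | S p.2 < p.1 ∧ p.1 ≤ T p.2} ∧
    ∀ C : Set (ℝ≥0∞ × Ω), MeasurableSet[predSigma 𝒜] C →
      MeasurableSet[predSigma 𝒢]
        {p : ℝ≥0∞ × Ω | (min (max (S p.2) p.1) (max (S p.2) (T p.2)), p.2) ∈ C ∧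
          S p.2 < p.1 ∧ S p.2 < T p.2} ∧
      MeasurableSet[predSigma 𝒢]
        {p : ℝ≥0∞ × Ω | (S p.2, p.2) ∈ C ∧ S p.2 < p.1 ∧ S p.2 < T p.2} := by
  obtain ⟨Q, hQc, hQb⟩ := GFP_exists_btwn
  have hgen : ∀ (s t : ℝ≥0∞) (A : Set Ω), MeasurableSet[𝒢 s] A →
      MeasurableSet[predSigma 𝒢] (Ioc s t ×ˢ A) := fun s t A hA =>
    MeasurableSpace.measurableSet_generateFrom (Or.inl ⟨s, t, A, hA, rfl⟩)
  -- the basic "after S" sets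
  have hVa : ∀ (a b : ℝ≥0∞) (B₀ : Set Ω), B₀ ⊆ {ω | S ω < T ω ∧ a < T ω} →
      (∀ q, MeasurableSet[G (max a q)] (B₀ ∩ {ω | S ω ≤ q})) →
      MeasurableSet[predSigma 𝒢] {p : ℝ≥0∞ × Ω | max a (S p.2) < p.1 ∧ p.1 ≤ b ∧ p.2 ∈ B₀} := by
    intro a b B₀ hsub hB
    have heq : {p : ℝ≥0∞ × Ω | max a (S p.2) < p.1 ∧ p.1 ≤ b ∧ p.2 ∈ B₀}
        = ⋃ q ∈ Q, Ioc (max a q) b ×ˢ ((B₀ ∩ {ω | S ω ≤ q}) ∩ {ω | max a q < T ω}) := by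
      ext ⟨t, ω⟩
      simp only [mem_setOf_eq, mem_iUnion, mem_prod, mem_Ioc, mem_inter_iff, exists_prop]
      constructor
      · rintro ⟨h1, h2, h3⟩
        obtain ⟨hST', haT⟩ := hsub h3
        obtain ⟨q, hqQ, hq1, hq2⟩ := hQb (max a (S ω)) (min t (T ω))
          (lt_min h1 (max_lt haT hST'))
        refine ⟨q, hqQ, ⟨?_, h2⟩, ⟨h3, ?_⟩, ?_⟩
        · exact max_lt ((le_max_left a (S ω)).trans_lt h1) (hq2.trans_le (min_le_left _ _))
        · exact ((le_max_right a (S ω)).trans_lt hq1).le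
        · exact max_lt haT (hq2.trans_le (min_le_right _ _))
      · rintro ⟨q, _, ⟨ht1, ht2⟩, ⟨hω, hSq⟩, _⟩
        exact ⟨max_lt ((le_max_left a q).trans_lt ht1)
          ((hSq.trans (le_max_right a q)).trans_lt ht1), ht2, hω⟩
    rw [heq]
    refine MeasurableSet.biUnion hQc fun q _ => hgen _ _ _ ?_
    exact hPiece (max a q) _ (hB q) fun ω hω => hω.2.trans (le_max_right a q)
  -- the "after T" indicator set
  set U' : Set (ℝ≥0∞ × Ω) := ⋃ q ∈ Q, Ioc q ⊤ ×ˢ (hD q).choose with hU'def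
  have hU'meas : MeasurableSet[predSigma 𝒢] U' :=
    MeasurableSet.biUnion hQc fun q _ => hgen q ⊤ _ (hD q).choose_spec.1
  have hU'char : ∀ p : ℝ≥0∞ × Ω, S p.2 < p.1 → S p.2 < T p.2 → (p ∈ U' ↔ T p.2 < p.1) := by
    rintro ⟨t, ω⟩ h1 h2
    simp only [hU'def, mem_iUnion, mem_prod, mem_Ioc, exists_prop]
    constructor
    · rintro ⟨q, hqQ, ⟨hq1, _⟩, hqD⟩
      exact lt_of_le_of_lt ((hD q).choose_spec.2.2 ω hqD h2) (max_lt h1 hq1)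
    · intro hTt
      obtain ⟨q, hqQ, hq1, hq2⟩ := hQb (T ω) t hTt
      exact ⟨q, hqQ, ⟨hq2, le_top⟩, (hD q).choose_spec.2.1 hq1.le⟩
  have hVaT : ∀ (a b : ℝ≥0∞) (B₀ : Set Ω), B₀ ⊆ {ω | S ω < T ω ∧ a < T ω} →
      (∀ q, MeasurableSet[G (max a q)] (B₀ ∩ {ω | S ω ≤ q})) →
      MeasurableSet[predSigma 𝒢]
        {p : ℝ≥0∞ × Ω | max a (S p.2) < p.1 ∧ p.1 ≤ b ∧ p.2 ∈ B₀ ∧ p.1 ≤ T p.2} := by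
    intro a b B₀ hsub hB
    have heq : {p : ℝ≥0∞ × Ω | max a (S p.2) < p.1 ∧ p.1 ≤ b ∧ p.2 ∈ B₀ ∧ p.1 ≤ T p.2}
        = {p : ℝ≥0∞ × Ω | max a (S p.2) < p.1 ∧ p.1 ≤ b ∧ p.2 ∈ B₀} \ U' := by
      ext ⟨t, ω⟩
      simp only [mem_setOf_eq, mem_diff]
      constructor
      · rintro ⟨h1, h2, h3, h4⟩
        refine ⟨⟨h1, h2, h3⟩, fun hU => ?_⟩
        exact absurd h4 (not_le.mpr
          ((hU'char (t, ω) ((le_max_right a (S ω)).trans_lt h1) (hsub h3).1).mp hU))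
      · rintro ⟨⟨h1, h2, h3⟩, hU⟩
        refine ⟨h1, h2, h3, not_lt.mp fun h => hU ?_⟩
        exact (hU'char (t, ω) ((le_max_right a (S ω)).trans_lt h1) (hsub h3).1).mpr h
    rw [heq]
    exact (hVa a b B₀ hsub hB).diff hU'meas
  have hZ : ∀ (c : ℝ≥0∞) (B₀ : Set Ω), B₀ ⊆ {ω | S ω < T ω} →
      (∀ q, MeasurableSet[G (max c q)] ((B₀ ∩ {ω | c < T ω}) ∩ {ω | S ω ≤ q})) →
      MeasurableSet[predSigma 𝒢] {p : ℝ≥0∞ × Ω | p.2 ∈ B₀ ∧ c < T p.2 ∧ T p.2 < p.1} := by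
    intro c B₀ hsub hB
    have heq : {p : ℝ≥0∞ × Ω | p.2 ∈ B₀ ∧ c < T p.2 ∧ T p.2 < p.1}
        = {p : ℝ≥0∞ × Ω | max c (S p.2) < p.1 ∧ p.1 ≤ ⊤ ∧ p.2 ∈ B₀ ∩ {ω | c < T ω}} ∩ U' := by
      ext ⟨t, ω⟩
      simp only [mem_setOf_eq, mem_inter_iff]
      constructor
      · rintro ⟨h1, h2, h3⟩
        have hS' : S ω < T ω := hsub h1
        exact ⟨⟨max_lt (h2.trans h3) (hS'.trans h3), le_top, h1, h2⟩,
          (hU'char (t, ω) (hS'.trans h3) hS').mpr h3⟩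
      · rintro ⟨⟨h1, _, h3, h4⟩, hU⟩
        exact ⟨h3, h4, (hU'char (t, ω) ((le_max_right c (S ω)).trans_lt h1) (hsub h3)).mp hU⟩
    rw [heq]
    exact (hVa c ⊤ _ (fun ω hω => ⟨hsub hω.1, hω.2⟩) hB).inter hU'meas
  -- measurability of {S < T} pieces
  have hSTq : ∀ q, MeasurableSet[G (max 0 q)] ({ω | S ω < T ω} ∩ {ω | S ω ≤ q}) := by
    intro q
    have h1 := GFP_lt_stop_inter G hT (fun x => hS x) q
    have heq : {ω | S ω < T ω} ∩ {ω | S ω ≤ q} = {ω | S ω < T ω ∧ S ω ≤ q} := by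
      ext ω; simp [mem_inter_iff]
    rw [heq, max_eq_right (zero_le : (0:ℝ≥0∞) ≤ q)]
    exact h1
  have hW' : MeasurableSet[predSigma 𝒢] {p : ℝ≥0∞ × Ω | S p.2 < p.1 ∧ S p.2 < T p.2} := by
    have h := hVa 0 ⊤ {ω | S ω < T ω}
      (fun ω hω => ⟨hω, lt_of_le_of_lt zero_le hω⟩) hSTq
    have heq : {p : ℝ≥0∞ × Ω | S p.2 < p.1 ∧ S p.2 < T p.2}
        = {p : ℝ≥0∞ × Ω | max 0 (S p.2) < p.1 ∧ p.1 ≤ ⊤ ∧ p.2 ∈ {ω | S ω < T ω}} := by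
      ext ⟨t, ω⟩
      simp only [mem_setOf_eq]
      constructor
      · rintro ⟨h1, h2⟩
        exact ⟨by rwa [max_eq_right zero_le], le_top, h2⟩
      · rintro ⟨h1, _, h3⟩
        exact ⟨by rwa [max_eq_right zero_le] at h1, h3⟩
    rw [heq]; exact h
  have hW : MeasurableSet[predSigma 𝒢] {p : ℝ≥0∞ × Ω | S p.2 < p.1 ∧ p.1 ≤ T p.2} := by
    have h := hVaT 0 ⊤ {ω | S ω < T ω}
      (fun ω hω => ⟨hω, lt_of_le_of_lt zero_le hω⟩) hSTq
    have heq : {p : ℝ≥0∞ × Ω | S p.2 < p.1 ∧ p.1 ≤ T p.2}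
        = {p : ℝ≥0∞ × Ω | max 0 (S p.2) < p.1 ∧ p.1 ≤ ⊤ ∧ p.2 ∈ {ω | S ω < T ω}
            ∧ p.1 ≤ T p.2} := by
      ext ⟨t, ω⟩
      simp only [mem_setOf_eq]
      constructor
      · rintro ⟨h1, h2⟩
        exact ⟨by rwa [max_eq_right zero_le], le_top, h1.trans_le h2, h2⟩
      · rintro ⟨h1, _, _, h4⟩
        exact ⟨by rwa [max_eq_right zero_le] at h1, h4⟩
    rw [heq]; exact h
  refine ⟨hW', hW, ?_⟩
  intro C hC
  refine MeasurableSpace.generateFrom_induction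
    (C := {C : Set (ℝ≥0∞ × Ω) | ∃ s t : ℝ≥0∞, ∃ A, MeasurableSet[𝒜 s] A ∧ C = Ioc s t ×ˢ A}
      ∪ {C : Set (ℝ≥0∞ × Ω) | ∃ A, MeasurableSet[𝒜 0] A ∧ C = ({0} : Set ℝ≥0∞) ×ˢ A})
    (p := fun C _ =>
      MeasurableSet[predSigma 𝒢]
        {p : ℝ≥0∞ × Ω | (min (max (S p.2) p.1) (max (S p.2) (T p.2)), p.2) ∈ C ∧
          S p.2 < p.1 ∧ S p.2 < T p.2} ∧
      MeasurableSet[predSigma 𝒢]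
        {p : ℝ≥0∞ × Ω | (S p.2, p.2) ∈ C ∧ S p.2 < p.1 ∧ S p.2 < T p.2})
    ?_ ?_ ?_ ?_ C hC
  · -- generators
    rintro C' (⟨a, b, A, hA, rfl⟩ | ⟨A₀, hA₀, rfl⟩) _
    · constructor
      · -- the φ-preimage of `Ioc a b ×ˢ A`
        by_cases hab : a < b
        · set Bs : Set Ω := A ∩ {ω | max (S ω) a < T ω} with hBs
          have hBq : ∀ q, MeasurableSet[G (max a q)] (Bs ∩ {ω | S ω ≤ q}) :=
            fun q => hRed a A hA q
          have hBsub : Bs ⊆ {ω | S ω < T ω ∧ a < T ω} := fun ω hω =>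
            ⟨(le_max_left _ _).trans_lt hω.2, (le_max_right _ _).trans_lt hω.2⟩
          have hZ1 : MeasurableSet[predSigma 𝒢]
              {p : ℝ≥0∞ × Ω | p.2 ∈ Bs ∧ a < T p.2 ∧ T p.2 < p.1} := by
            refine hZ a Bs (fun ω hω => (hBsub hω).1) fun q => ?_
            have h : (Bs ∩ {ω | a < T ω}) ∩ {ω | S ω ≤ q} = Bs ∩ {ω | S ω ≤ q} := by
              ext ω
              simp only [mem_inter_iff, mem_setOf_eq]
              exact ⟨fun h => ⟨h.1.1, h.2⟩, fun h => ⟨⟨h.1, (hBsub h.1).2⟩, h.2⟩⟩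
            rw [h]; exact hBq q
          have hZ2 : MeasurableSet[predSigma 𝒢]
              {p : ℝ≥0∞ × Ω | p.2 ∈ Bs ∧ b < T p.2 ∧ T p.2 < p.1} := by
            refine hZ b Bs (fun ω hω => (hBsub hω).1) fun q => ?_
            have h : (Bs ∩ {ω | b < T ω}) ∩ {ω | S ω ≤ q}
                = (Bs ∩ {ω | S ω ≤ q}) ∩ {ω | T ω ≤ b}ᶜ := by
              ext ω
              simp only [mem_inter_iff, mem_setOf_eq, mem_compl_iff, not_le]
              tauto
            rw [h]
            exact (G.mono (max_le_max hab.le le_rfl) _ (hBq q)).inter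
              (G.mono (le_max_left b q) _ (hT b)).compl
          have hX1 : MeasurableSet[predSigma 𝒢]
              {p : ℝ≥0∞ × Ω | max a (S p.2) < p.1 ∧ p.1 ≤ b ∧ p.2 ∈ Bs ∧ p.1 ≤ T p.2} :=
            hVaT a b Bs hBsub hBq
          have hXeq : {p : ℝ≥0∞ × Ω |
                (min (max (S p.2) p.1) (max (S p.2) (T p.2)), p.2) ∈ Ioc a b ×ˢ A ∧
                S p.2 < p.1 ∧ S p.2 < T p.2}
              = {p : ℝ≥0∞ × Ω | max a (S p.2) < p.1 ∧ p.1 ≤ b ∧ p.2 ∈ Bs ∧ p.1 ≤ T p.2}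
                ∪ ({p : ℝ≥0∞ × Ω | p.2 ∈ Bs ∧ a < T p.2 ∧ T p.2 < p.1}
                    \ {p : ℝ≥0∞ × Ω | p.2 ∈ Bs ∧ b < T p.2 ∧ T p.2 < p.1}) := by
            ext ⟨t, ω⟩
            simp only [mem_setOf_eq, mem_prod, mem_Ioc, mem_union, mem_diff, hBs,
              mem_inter_iff]
            constructor
            · rintro ⟨⟨⟨hρ1, hρ2⟩, hωA⟩, hSt, hST'⟩
              rw [max_eq_right hSt.le, max_eq_right (hST ω)] at hρ1 hρ2
              by_cases htT : t ≤ T ω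
              · rw [min_eq_left htT] at hρ1 hρ2
                exact Or.inl ⟨max_lt hρ1 hSt, hρ2,
                  ⟨hωA, max_lt hST' (hρ1.trans_le htT)⟩, htT⟩
              · push_neg at htT
                rw [min_eq_right htT.le] at hρ1 hρ2
                exact Or.inr ⟨⟨⟨hωA, max_lt hST' hρ1⟩, hρ1, htT⟩,
                  fun h => absurd hρ2 (not_le.mpr h.2.1)⟩
            · rintro (⟨h1, h2, ⟨hωA, hωT⟩, h4⟩ | ⟨⟨⟨hωA, hωT⟩, haT, hTt⟩, hnot⟩)
              · have hSt : S ω < t := (le_max_right a (S ω)).trans_lt h1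
                have hST' : S ω < T ω := (le_max_left (S ω) a).trans_lt hωT
                refine ⟨⟨⟨?_, ?_⟩, hωA⟩, hSt, hST'⟩
                · rw [max_eq_right hSt.le, max_eq_right (hST ω), min_eq_left h4]
                  exact (le_max_left a (S ω)).trans_lt h1
                · rw [max_eq_right hSt.le, max_eq_right (hST ω), min_eq_left h4]
                  exact h2
              · have hST' : S ω < T ω := (le_max_left (S ω) a).trans_lt hωT
                have hTb : T ω ≤ b := not_lt.mp fun hb => hnot ⟨⟨hωA, hωT⟩, hb, hTt⟩
                have hSt : S ω < t := hST'.trans hTt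
                refine ⟨⟨⟨?_, ?_⟩, hωA⟩, hSt, hST'⟩
                · rw [max_eq_right hSt.le, max_eq_right (hST ω), min_eq_right hTt.le]
                  exact haT
                · rw [max_eq_right hSt.le, max_eq_right (hST ω), min_eq_right hTt.le]
                  exact hTb
          rw [hXeq]
          exact hX1.union (hZ1.diff hZ2)
        · have h : {p : ℝ≥0∞ × Ω |
              (min (max (S p.2) p.1) (max (S p.2) (T p.2)), p.2) ∈ Ioc a b ×ˢ A ∧
              S p.2 < p.1 ∧ S p.2 < T p.2} = ∅ := by
            ext p; simp [Ioc_eq_empty hab]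
          rw [h]; exact @MeasurableSet.empty _ (predSigma 𝒢)
      · -- the φ₀-preimage of `Ioc a b ×ˢ A`
        set B0 : Set Ω := (A ∩ {ω | max (S ω) a < T ω}) ∩ {ω | a < S ω ∧ S ω ≤ b} with hB0
        have hB0q : ∀ q, MeasurableSet[G (max a q)] (B0 ∩ {ω | S ω ≤ q}) := by
          intro q
          have heq : B0 ∩ {ω | S ω ≤ q}
              = ((A ∩ {ω | max (S ω) a < T ω} ∩ {ω | S ω ≤ q}) ∩ {ω | S ω ≤ a}ᶜ)
                ∩ {ω | S ω ≤ min b q} := by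
            ext ω
            simp only [hB0, mem_inter_iff, mem_setOf_eq, mem_compl_iff, not_le, le_min_iff]
            tauto
          rw [heq]
          exact ((hRed a A hA q).inter
              (G.mono (le_max_left a q) _ (hS a)).compl).inter
            (G.mono ((min_le_right b q).trans (le_max_right a q)) _ (hS (min b q)))
        have hB0sub : B0 ⊆ {ω | S ω < T ω ∧ a < T ω} := fun ω hω =>
          ⟨(le_max_left _ _).trans_lt hω.1.2, (le_max_right _ _).trans_lt hω.1.2⟩
        have heq : {p : ℝ≥0∞ × Ω | (S p.2, p.2) ∈ Ioc a b ×ˢ A ∧ S p.2 < p.1 ∧ S p.2 < T p.2}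
            = {p : ℝ≥0∞ × Ω | max a (S p.2) < p.1 ∧ p.1 ≤ ⊤ ∧ p.2 ∈ B0} := by
          ext ⟨t, ω⟩
          simp only [mem_setOf_eq, mem_prod, mem_Ioc, hB0, mem_inter_iff]
          constructor
          · rintro ⟨⟨⟨haS, hSb⟩, hωA⟩, hSt, hST'⟩
            exact ⟨max_lt (haS.trans hSt) hSt, le_top,
              ⟨hωA, max_lt hST' (haS.trans hST')⟩, haS, hSb⟩
          · rintro ⟨h1, _, ⟨hωA, hωT⟩, haS, hSb⟩
            exact ⟨⟨⟨haS, hSb⟩, hωA⟩, (le_max_right a (S ω)).trans_lt h1,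
              (le_max_left (S ω) a).trans_lt hωT⟩
        rw [heq]
        exact hVa a ⊤ B0 hB0sub hB0q
    · constructor
      · have h : {p : ℝ≥0∞ × Ω |
            (min (max (S p.2) p.1) (max (S p.2) (T p.2)), p.2) ∈ ({0} : Set ℝ≥0∞) ×ˢ A₀ ∧
            S p.2 < p.1 ∧ S p.2 < T p.2} = ∅ := by
          ext ⟨t, ω⟩
          simp only [mem_setOf_eq, mem_prod, mem_singleton_iff, mem_empty_iff_false,
            iff_false, not_and]
          rintro ⟨h0, _⟩ hSt hST'
          have h1 : (0:ℝ≥0∞) < min (max (S ω) t) (max (S ω) (T ω)) :=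
            lt_min ((lt_of_le_of_lt zero_le hSt).trans_le (le_max_right _ _))
              ((lt_of_le_of_lt zero_le hST').trans_le (le_max_right _ _))
          exact absurd h0 h1.ne'
        rw [h]; exact @MeasurableSet.empty _ (predSigma 𝒢)
      · set B6 : Set Ω := (A₀ ∩ {ω | max (S ω) 0 < T ω}) ∩ {ω | S ω ≤ 0} with hB6
        have hB6meas : MeasurableSet[G 0] B6 := by
          have h := hRed 0 A₀ hA₀ 0
          rwa [max_self] at h
        have hB6q : ∀ q, MeasurableSet[G (max 0 q)] (B6 ∩ {ω | S ω ≤ q}) := by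
          intro q
          have heq : B6 ∩ {ω | S ω ≤ q} = B6 := by
            ext ω
            simp only [hB6, mem_inter_iff, mem_setOf_eq]
            exact ⟨fun h => h.1, fun h => ⟨h, h.2.trans (zero_le : (0:ℝ≥0∞) ≤ q)⟩⟩
          rw [heq]
          exact G.mono (le_max_left 0 q) _ hB6meas
        have hB6sub : B6 ⊆ {ω | S ω < T ω ∧ 0 < T ω} := fun ω hω =>
          ⟨(le_max_left _ _).trans_lt hω.1.2, (le_max_right _ _).trans_lt hω.1.2⟩
        have heq : {p : ℝ≥0∞ × Ω | (S p.2, p.2) ∈ ({0} : Set ℝ≥0∞) ×ˢ A₀ ∧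
              S p.2 < p.1 ∧ S p.2 < T p.2}
            = {p : ℝ≥0∞ × Ω | max 0 (S p.2) < p.1 ∧ p.1 ≤ ⊤ ∧ p.2 ∈ B6} := by
          ext ⟨t, ω⟩
          simp only [mem_setOf_eq, mem_prod, mem_singleton_iff, hB6, mem_inter_iff]
          constructor
          · rintro ⟨⟨hS0, hωA⟩, hSt, hST'⟩
            refine ⟨by rwa [max_eq_right zero_le], le_top,
              ⟨hωA, ?_⟩, le_of_eq hS0⟩
            rwa [max_eq_left zero_le]
          · rintro ⟨h1, _, ⟨hωA, hωT⟩, hS0⟩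
            refine ⟨⟨le_antisymm hS0 zero_le, hωA⟩, ?_, ?_⟩
            · rwa [max_eq_right zero_le] at h1
            · rwa [max_eq_left zero_le] at hωT
        rw [heq]
        exact hVa 0 ⊤ B6 hB6sub hB6q
  · -- empty set
    constructor
    · have h : {p : ℝ≥0∞ × Ω |
          (min (max (S p.2) p.1) (max (S p.2) (T p.2)), p.2) ∈ (∅ : Set (ℝ≥0∞ × Ω)) ∧
          S p.2 < p.1 ∧ S p.2 < T p.2} = ∅ := by
        ext p; simp
      rw [h]; exact @MeasurableSet.empty _ (predSigma 𝒢)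
    · have h : {p : ℝ≥0∞ × Ω | (S p.2, p.2) ∈ (∅ : Set (ℝ≥0∞ × Ω)) ∧
          S p.2 < p.1 ∧ S p.2 < T p.2} = ∅ := by
        ext p; simp
      rw [h]; exact @MeasurableSet.empty _ (predSigma 𝒢)
  · -- complements
    rintro C' _ ⟨ih1, ih2⟩
    constructor
    · have h : {p : ℝ≥0∞ × Ω |
          (min (max (S p.2) p.1) (max (S p.2) (T p.2)), p.2) ∈ C'ᶜ ∧
          S p.2 < p.1 ∧ S p.2 < T p.2}
          = {p : ℝ≥0∞ × Ω | S p.2 < p.1 ∧ S p.2 < T p.2}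
            \ {p : ℝ≥0∞ × Ω |
              (min (max (S p.2) p.1) (max (S p.2) (T p.2)), p.2) ∈ C' ∧
              S p.2 < p.1 ∧ S p.2 < T p.2} := by
        ext p
        simp only [mem_setOf_eq, mem_compl_iff, mem_diff]
        tauto
      rw [h]; exact hW'.diff ih1
    · have h : {p : ℝ≥0∞ × Ω | (S p.2, p.2) ∈ C'ᶜ ∧ S p.2 < p.1 ∧ S p.2 < T p.2}
          = {p : ℝ≥0∞ × Ω | S p.2 < p.1 ∧ S p.2 < T p.2}
            \ {p : ℝ≥0∞ × Ω | (S p.2, p.2) ∈ C' ∧ S p.2 < p.1 ∧ S p.2 < T p.2} := by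
        ext p
        simp only [mem_setOf_eq, mem_compl_iff, mem_diff]
        tauto
      rw [h]; exact hW'.diff ih2
  · -- countable unions
    intro f _ ih
    constructor
    · have h : {p : ℝ≥0∞ × Ω |
          (min (max (S p.2) p.1) (max (S p.2) (T p.2)), p.2) ∈ ⋃ i, f i ∧
          S p.2 < p.1 ∧ S p.2 < T p.2}
          = ⋃ i, {p : ℝ≥0∞ × Ω |
            (min (max (S p.2) p.1) (max (S p.2) (T p.2)), p.2) ∈ f i ∧
            S p.2 < p.1 ∧ S p.2 < T p.2} := by
        ext p
        simp only [mem_setOf_eq, mem_iUnion]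
        tauto
      rw [h]; exact MeasurableSet.iUnion fun i => (ih i).1
    · have h : {p : ℝ≥0∞ × Ω | (S p.2, p.2) ∈ ⋃ i, f i ∧ S p.2 < p.1 ∧ S p.2 < T p.2}
          = ⋃ i, {p : ℝ≥0∞ × Ω | (S p.2, p.2) ∈ f i ∧ S p.2 < p.1 ∧ S p.2 < T p.2} := by
        ext p
        simp only [mem_setOf_eq, mem_iUnion]
        tauto
      rw [h]; exact MeasurableSet.iUnion fun i => (ih i).2

theorem gFrag_predictable (S T : Ω → ℝ≥0∞) (hS : IsStoppingTime G (fun ω => (S ω : WithTop ℝ≥0∞)))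
    (hT : IsStoppingTime G (fun ω => (T ω : WithTop ℝ≥0∞))) (hST : ∀ ω, S ω ≤ T ω) :
    (∀ K : ℝ≥0∞ → Ω → ℝ,
      Measurable[predSigma (fun t => (G t : MeasurableSpace Ω))]
        (fun p : ℝ≥0∞ × Ω => K p.1 p.2) →
      Measurable[predSigma (gFrag F G τ S T)] (fun p : ℝ≥0∞ × Ω => frag S T K p.1 p.2) ∧
      Measurable[predSigma (gFrag F G τ S T)]
        (fun p : ℝ≥0∞ × Ω => if S p.2 < p.1 ∧ p.1 ≤ T p.2 then K p.1 p.2 else 0)) ∧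
    ∀ K₂ : ℝ≥0∞ → Ω → ℝ,
      Measurable[predSigma (gFrag F G τ S T)] (fun p : ℝ≥0∞ × Ω => K₂ p.1 p.2) →
      Measurable[predSigma (fun t => (G t : MeasurableSpace Ω))]
        (fun p : ℝ≥0∞ × Ω => frag S T K₂ p.1 p.2) ∧
      Measurable[predSigma (fun t => (G t : MeasurableSpace Ω))]
        (fun p : ℝ≥0∞ × Ω => if S p.2 < p.1 ∧ p.1 ≤ T p.2 then K₂ p.1 p.2 else 0) := by
  classical
  replace hS : ∀ x, MeasurableSet[G x] {ω | S ω ≤ x} := fun x => by simpa using hS x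
  replace hT : ∀ x, MeasurableSet[G x] {ω | T ω ≤ x} := fun x => by simpa using hT x
  have main : ∀ (𝒢 𝒜 : ℝ≥0∞ → MeasurableSpace Ω),
      MeasurableSet[predSigma 𝒢] {p : ℝ≥0∞ × Ω | S p.2 < p.1 ∧ S p.2 < T p.2} →
      MeasurableSet[predSigma 𝒢] {p : ℝ≥0∞ × Ω | S p.2 < p.1 ∧ p.1 ≤ T p.2} →
      (∀ C : Set (ℝ≥0∞ × Ω), MeasurableSet[predSigma 𝒜] C →
        MeasurableSet[predSigma 𝒢]
          {p : ℝ≥0∞ × Ω | (min (max (S p.2) p.1) (max (S p.2) (T p.2)), p.2) ∈ C ∧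
            S p.2 < p.1 ∧ S p.2 < T p.2} ∧
        MeasurableSet[predSigma 𝒢]
          {p : ℝ≥0∞ × Ω | (S p.2, p.2) ∈ C ∧ S p.2 < p.1 ∧ S p.2 < T p.2}) →
      ∀ K : ℝ≥0∞ → Ω → ℝ, Measurable[predSigma 𝒜] (fun p : ℝ≥0∞ × Ω => K p.1 p.2) →
        Measurable[predSigma 𝒢] (fun p : ℝ≥0∞ × Ω => frag S T K p.1 p.2) ∧
        Measurable[predSigma 𝒢]
          (fun p : ℝ≥0∞ × Ω => if S p.2 < p.1 ∧ p.1 ≤ T p.2 then K p.1 p.2 else 0) := by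
    intro 𝒢 𝒜 hW' hW hC K hK
    constructor
    · -- the process `K^{(S,T]}`
      have heq : (fun p : ℝ≥0∞ × Ω => frag S T K p.1 p.2)
          = fun p : ℝ≥0∞ × Ω =>
            (if S p.2 < p.1 ∧ S p.2 < T p.2 then
              K (min (max (S p.2) p.1) (max (S p.2) (T p.2))) p.2 else 0)
            - (if S p.2 < p.1 ∧ S p.2 < T p.2 then K (S p.2) p.2 else 0) := by
        funext p
        by_cases hp : S p.2 < p.1 ∧ S p.2 < T p.2
        · rw [if_pos hp, if_pos hp]; rfl
        · have hρ : min (max (S p.2) p.1) (max (S p.2) (T p.2)) = S p.2 := by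
            rcases not_and_or.mp hp with h | h
            · rw [max_eq_left (not_lt.mp h)]
              exact min_eq_left (le_max_left _ _)
            · rw [max_eq_left (not_lt.mp h)]
              exact min_eq_right (le_max_left _ _)
          simp only [if_neg hp, frag, hρ, sub_self, sub_zero]
      rw [heq]
      refine Measurable.sub ?_ ?_
      · refine GFP_meas_ite hW' fun B hB => ?_
        exact (hC _ (hK hB)).1
      · refine GFP_meas_ite hW' fun B hB => ?_
        exact (hC _ (hK hB)).2
    · -- the process `1_{(S,T]} K`
      have heq : (fun p : ℝ≥0∞ × Ω => if S p.2 < p.1 ∧ p.1 ≤ T p.2 then K p.1 p.2 else 0)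
          = fun p : ℝ≥0∞ × Ω => if S p.2 < p.1 ∧ p.1 ≤ T p.2 then
              K (min (max (S p.2) p.1) (max (S p.2) (T p.2))) p.2 else 0 := by
        funext p
        by_cases hp : S p.2 < p.1 ∧ p.1 ≤ T p.2
        · have hρ : min (max (S p.2) p.1) (max (S p.2) (T p.2)) = p.1 := by
            rw [max_eq_right hp.1.le, max_eq_right (hST p.2)]
            exact min_eq_left hp.2
          rw [if_pos hp, if_pos hp, hρ]
        · rw [if_neg hp, if_neg hp]
      rw [heq]
      refine GFP_meas_ite hW fun B hB => ?_
      have h1 := (hC _ (hK hB)).1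
      have heq2 : {x : ℝ≥0∞ × Ω |
            K (min (max (S x.2) x.1) (max (S x.2) (T x.2))) x.2 ∈ B ∧
            S x.2 < x.1 ∧ x.1 ≤ T x.2}
          = {p : ℝ≥0∞ × Ω |
              (min (max (S p.2) p.1) (max (S p.2) (T p.2)), p.2) ∈
                (fun p : ℝ≥0∞ × Ω => K p.1 p.2) ⁻¹' B ∧
              S p.2 < p.1 ∧ S p.2 < T p.2}
            ∩ {p : ℝ≥0∞ × Ω | S p.2 < p.1 ∧ p.1 ≤ T p.2} := by
        ext p
        simp only [mem_setOf_eq, mem_inter_iff, mem_preimage]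
        constructor
        · rintro ⟨hKB, hSt, htT⟩
          exact ⟨⟨hKB, hSt, hSt.trans_le htT⟩, hSt, htT⟩
        · rintro ⟨⟨hKB, _, _⟩, hSt, htT⟩
          exact ⟨hKB, hSt, htT⟩
      exact heq2 ▸ h1.inter hW
  obtain ⟨hW'1, hW1, hC1⟩ := GFP_key G hS hT hST (gFrag F G τ S T)
    (GFP_hPiece_H F G τ) (GFP_hD_H F G τ S T)
    (fun t => (G t : MeasurableSpace Ω)) (GFP_hRed_G G hS hT)
  obtain ⟨hW'2, hW2, hC2⟩ := GFP_key G hS hT hST (fun t => (G t : MeasurableSpace Ω))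
    (GFP_hPiece_G G hT) (GFP_hD_G G hT S)
    (gFrag F G τ S T) (GFP_hRed_H F G τ hS hT)
  exact ⟨main _ _ hW'1 hW1 hC1, main _ _ hW'2 hW2 hC2⟩

end
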